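/- For each fixed integer m ≥ 1, a(n,m) = (log n)^m / m! + O((log n)^{m−1}) as n → ∞; that is, there exist constants C > 0 and N such that for all n ≥ N, |a(n,m) − (log n)^m / m!| ≤ C (log n)^{m−1}. -/

import Mathlib

open Finset

noncomputable def aa (n m : ℕ) : ℝ :=
  ∑ k ∈ Finset.Icc 1 n, (n.choose k : ℝ) * (-1 : ℝ) ^ (k + 1) / (k : ℝ) ^ m

lemma aa_succ_n (m n : ℕ) :
    aa (n + 1) (m + 1) = aa n (m + 1) + aa (n + 1) m / (n + 1) := by
  have hext : aa n (m + 1)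
      = ∑ k ∈ Finset.Icc 1 (n + 1), (n.choose k : ℝ) * (-1 : ℝ) ^ (k + 1) / (k : ℝ) ^ (m+1) := by
    rw [aa, Finset.sum_Icc_succ_top (by omega : 1 ≤ n + 1)]
    rw [Nat.choose_succ_self]
    simp
  rw [hext, aa, aa, Finset.sum_div, ← Finset.sum_add_distrib]
  apply Finset.sum_congr rfl
  intro k hk
  simp only [Finset.mem_Icc] at hk
  obtain ⟨k, rfl⟩ : ∃ k', k = k' + 1 := ⟨k - 1, by omega⟩
  have hch : ((n+1).choose (k+1) : ℝ) = (n.choose (k+1) : ℝ) + (n.choose k : ℝ) := by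
    rw [Nat.choose_succ_succ']
    push_cast
    ring
  have hkey : (n.choose k : ℝ) * ((n:ℝ) + 1) = ((n+1).choose (k+1) : ℝ) * ((k:ℝ)+1) := by
    have := Nat.add_one_mul_choose_eq n k
    have h2 := congrArg (Nat.cast : ℕ → ℝ) this
    push_cast at h2
    linarith [h2]
  have hk1 : ((k : ℝ) + 1) > 0 := by positivity
  have hn1 : ((n : ℝ) + 1) > 0 := by positivity
  have hdiv : (n.choose k : ℝ) / ((k:ℝ)+1)^(m+1)
      = ((n+1).choose (k+1) : ℝ) / (((k:ℝ)+1)^m * ((n:ℝ)+1)) := by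
    rw [div_eq_div_iff (by positivity) (by positivity)]
    rw [pow_succ]
    nlinarith [hkey, pow_pos hk1 m]
  push_cast
  rw [div_div]
  have h3 : ((n+1).choose (k+1) : ℝ) * (-1:ℝ)^(k+1+1) / (((k:ℝ)+1)^m * ((n:ℝ)+1))
      = (n.choose k : ℝ) * (-1:ℝ)^(k+1+1) / ((k:ℝ)+1)^(m+1) := by
    calc ((n+1).choose (k+1) : ℝ) * (-1:ℝ)^(k+1+1) / (((k:ℝ)+1)^m * ((n:ℝ)+1))
        = (((n+1).choose (k+1) : ℝ) / (((k:ℝ)+1)^m * ((n:ℝ)+1))) * (-1:ℝ)^(k+1+1) := by ring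
      _ = ((n.choose k : ℝ) / ((k:ℝ)+1)^(m+1)) * (-1:ℝ)^(k+1+1) := by rw [← hdiv]
      _ = (n.choose k : ℝ) * (-1:ℝ)^(k+1+1) / ((k:ℝ)+1)^(m+1) := by ring
  rw [h3]
  linear_combination (((-1:ℝ)) ^ (k + 1 + 1) / ((k:ℝ)+1)^(m+1)) * hch

lemma aa_rec (m n : ℕ) : aa n (m + 1) = ∑ j ∈ Finset.Icc 1 n, aa j m / j := by
  induction n with
  | zero => simp [aa]
  | succ n ih =>
    rw [aa_succ_n, ih, Finset.sum_Icc_succ_top (by omega : 1 ≤ n + 1)]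
    push_cast
    ring

lemma aa_zero (n : ℕ) (hn : 1 ≤ n) : aa n 0 = 1 := by
  have h := Int.alternating_sum_range_choose_of_ne (by omega : n ≠ 0)
  have h2 : (∑ i ∈ Finset.range (n+1), (-1:ℝ)^i * (n.choose i : ℝ)) = 0 := by
    exact_mod_cast congrArg (Int.cast : ℤ → ℝ) h
  rw [Finset.sum_range_succ'] at h2
  simp only [pow_zero, Nat.choose_zero_right, Nat.cast_one, one_mul, mul_one] at h2
  have h3 : (∑ i ∈ Finset.range n, (-1:ℝ)^(i+1) * (n.choose (i+1) : ℝ)) = -1 := by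
    linarith
  rw [aa]
  have : ∑ k ∈ Finset.Icc 1 n, (n.choose k : ℝ) * (-1 : ℝ) ^ (k + 1) / (k : ℝ) ^ 0
      = ∑ i ∈ Finset.range n, (n.choose (i+1) : ℝ) * (-1 : ℝ) ^ (i + 2) := by
    rw [show Finset.Icc 1 n = Finset.Ico 1 (n+1) by rfl, Finset.sum_Ico_eq_sum_range]
    simp only [pow_zero, div_one]
    refine Finset.sum_congr (by congr 1) ?_
    intro i _
    rw [add_comm 1 i]

  rw [this]
  have h4 : ∑ i ∈ Finset.range n, (n.choose (i+1) : ℝ) * (-1 : ℝ) ^ (i + 2)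
      = - ∑ i ∈ Finset.range n, (-1:ℝ)^(i+1) * (n.choose (i+1) : ℝ) := by
    rw [← Finset.sum_neg_distrib]
    apply Finset.sum_congr rfl
    intro i _
    ring
  rw [h4, h3]; norm_num

lemma aa_one (n : ℕ) : aa n 1 = ∑ j ∈ Finset.Icc 1 n, 1 / (j:ℝ) := by
  rw [show (1:ℕ) = 0 + 1 by rfl, aa_rec]
  apply Finset.sum_congr rfl
  intro j hj
  simp only [Finset.mem_Icc] at hj
  rw [aa_zero j hj.1]

-- harmonic bounds:  Hₙ − 1 ≤ log n ≤ Hₙ − 1/n  for n ≥ 1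
lemma log_succ_sub (n : ℕ) (hn : 1 ≤ n) :
    1/((n:ℝ)+1) ≤ Real.log (n+1) - Real.log n ∧ Real.log (n+1) - Real.log n ≤ 1/(n:ℝ) := by
  have hn0 : (0:ℝ) < n := by exact_mod_cast hn
  have hn1 : (0:ℝ) < (n:ℝ)+1 := by positivity
  constructor
  · have h := Real.log_le_sub_one_of_pos (show (0:ℝ) < n/(n+1) by positivity)
    rw [Real.log_div (by positivity) (by positivity)] at h
    have : (n:ℝ)/(n+1) - 1 = -(1/((n:ℝ)+1)) := by field_simp; ring
    rw [this] at h
    linarith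
  · have h := Real.log_le_sub_one_of_pos (show (0:ℝ) < ((n:ℝ)+1)/n by positivity)
    rw [Real.log_div (by positivity) (by positivity)] at h
    have : ((n:ℝ)+1)/n - 1 = 1/(n:ℝ) := by field_simp; ring
    rw [this] at h
    linarith

lemma harmonic_bounds (n : ℕ) (hn : 1 ≤ n) :
    (∑ j ∈ Finset.Icc 1 n, 1 / (j:ℝ)) - 1 ≤ Real.log n ∧
    Real.log n ≤ (∑ j ∈ Finset.Icc 1 n, 1 / (j:ℝ)) - 1/(n:ℝ) := by
  induction n with
  | zero => omega
  | succ n ih =>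
    rcases Nat.eq_or_lt_of_le hn with h1 | h1
    · simp [← h1]
    · have hn' : 1 ≤ n := by omega
      obtain ⟨ih1, ih2⟩ := ih hn'
      obtain ⟨hl, hu⟩ := log_succ_sub n hn'
      rw [Finset.sum_Icc_succ_top (by omega : 1 ≤ n + 1)]
      have hn0 : (0:ℝ) < n := by exact_mod_cast hn'
      push_cast
      constructor
      · linarith
      · linarith

lemma log_succ_sub' (n : ℕ) (hn : 1 ≤ n) :
    1/((n:ℝ)+1) ≤ Real.log (n+1) - Real.log n ∧ Real.log (n+1) - Real.log n ≤ 1/(n:ℝ) := by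
  have hn0 : (0:ℝ) < n := by exact_mod_cast hn
  constructor
  · have h := Real.log_le_sub_one_of_pos (show (0:ℝ) < n/(n+1) by positivity)
    rw [Real.log_div (by positivity) (by positivity)] at h
    have : (n:ℝ)/(n+1) - 1 = -(1/((n:ℝ)+1)) := by field_simp; ring
    rw [this] at h; linarith
  · have h := Real.log_le_sub_one_of_pos (show (0:ℝ) < ((n:ℝ)+1)/n by positivity)
    rw [Real.log_div (by positivity) (by positivity)] at h
    have : ((n:ℝ)+1)/n - 1 = 1/(n:ℝ) := by field_simp; ring
    rw [this] at h; linarith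

lemma sub_pow_bounds (q : ℕ) {a b : ℝ} (hb : 0 ≤ b) (hba : b ≤ a) :
    (q:ℝ) * b^(q-1) * (a-b) ≤ a^q - b^q ∧ a^q - b^q ≤ (q:ℝ) * a^(q-1) * (a-b) := by
  have ha : 0 ≤ a := hb.trans hba
  have hgeom := geom_sum₂_mul a b q
  have hSl : (q:ℝ) * b^(q-1) ≤ ∑ i ∈ Finset.range q, a^i * b^(q-1-i) := by
    calc (q:ℝ) * b^(q-1) = ∑ _i ∈ Finset.range q, b^(q-1) := by
          rw [Finset.sum_const, Finset.card_range, nsmul_eq_mul]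
      _ ≤ _ := by
          apply Finset.sum_le_sum
          intro i hi
          simp only [Finset.mem_range] at hi
          have : b^(q-1) = b^i * b^(q-1-i) := by rw [← pow_add]; congr 1; omega
          rw [this]
          gcongr
  have hSu : (∑ i ∈ Finset.range q, a^i * b^(q-1-i)) ≤ (q:ℝ) * a^(q-1) := by
    calc (∑ i ∈ Finset.range q, a^i * b^(q-1-i)) ≤ ∑ _i ∈ Finset.range q, a^(q-1) := by
          apply Finset.sum_le_sum
          intro i hi
          simp only [Finset.mem_range] at hi
          have : a^(q-1) = a^i * a^(q-1-i) := by rw [← pow_add]; congr 1; omega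
          rw [this]
          gcongr
      _ = (q:ℝ) * a^(q-1) := by rw [Finset.sum_const, Finset.card_range, nsmul_eq_mul]
  have hd : 0 ≤ a - b := by linarith
  constructor
  · rw [← hgeom]
    exact mul_le_mul_of_nonneg_right hSl hd
  · rw [← hgeom]
    exact mul_le_mul_of_nonneg_right hSu hd

lemma one_le_log (x : ℝ) (hx : 3 ≤ x) : 1 ≤ Real.log x := by
  have he : Real.exp 1 ≤ x :=
    le_trans (le_of_lt (lt_of_lt_of_le Real.exp_one_lt_d9 (by norm_num))) hx
  calc (1:ℝ) = Real.log (Real.exp 1) := by rw [Real.log_exp]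
    _ ≤ Real.log x := Real.log_le_log (Real.exp_pos 1) he

lemma log_two_le_one : Real.log 2 ≤ 1 := by
  have h2 : (2:ℝ) ≤ Real.exp 1 := by
    have := Real.add_one_le_exp (1:ℝ)
    linarith
  calc Real.log 2 ≤ Real.log (Real.exp 1) :=
        Real.log_le_log (by norm_num) h2
    _ = 1 := Real.log_exp 1

-- main per-term bound, for j = i+2, i >= 1 (so j >= 3), j <= n
lemma per_term (p : ℕ) (i n : ℕ) (hi : 1 ≤ i) (hin : i + 2 ≤ n) :
    |(Real.log (i+2:ℕ))^p / ((i:ℝ)+2)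
      - ((Real.log (i+2:ℕ))^(p+1) - (Real.log (i+1:ℕ))^(p+1))/((p:ℝ)+1)|
    ≤ ((p:ℝ)+4) * (Real.log n)^p * (1/((i:ℝ)+1) - 1/((i:ℝ)+2)) := by
  have hi1 : (1:ℝ) ≤ (i:ℝ) := by exact_mod_cast hi
  have hj3 : (3:ℝ) ≤ (i:ℝ)+2 := by linarith
  have hcast2 : ((i+2:ℕ):ℝ) = (i:ℝ)+2 := by push_cast; ring
  have hcast1 : ((i+1:ℕ):ℝ) = (i:ℝ)+1 := by push_cast; ring
  rw [hcast2, hcast1]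
  have hnr : ((i:ℝ)+2) ≤ (n:ℝ) := by
    have : ((i+2:ℕ):ℝ) ≤ (n:ℝ) := Nat.cast_le.mpr hin
    push_cast at this; linarith
  have hd := log_succ_sub' (i+1) (by omega)
  rw [hcast1] at hd
  have hcast2' : ((i:ℕ):ℝ) + 1 + 1 = (i:ℝ) + 2 := by ring
  rw [hcast2'] at hd
  obtain ⟨hdl, hdu⟩ := hd
  set a := Real.log ((i:ℝ)+2) with ha_def
  set b := Real.log ((i:ℝ)+1) with hb_def
  set u := 1/((i:ℝ)+1) with hu_def
  set v := 1/((i:ℝ)+2) with hv_def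
  set Lp := (Real.log (n:ℝ))^p with hLp_def
  have ha1 : 1 ≤ a := one_le_log _ hj3
  have hb0 : 0 ≤ b := Real.log_nonneg (by linarith)
  have hba : b ≤ a := Real.log_le_log (by positivity) (by linarith)
  have hd0 : (0:ℝ) ≤ a - b := by linarith
  have hap : (0:ℝ) ≤ a ^ p := by positivity
  have hLp0 : (0:ℝ) ≤ Lp := by positivity
  have hapn : a^p ≤ Lp := by
    rw [hLp_def, ha_def]
    exact pow_le_pow_left₀ (Real.log_nonneg (by linarith))
      (Real.log_le_log (by positivity) hnr) p
  have hvpos : (0:ℝ) < v := by rw [hv_def]; positivity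
  have huv0 : (0:ℝ) ≤ u - v := by
    rw [hu_def, hv_def]
    have := one_div_le_one_div_of_le (by positivity : (0:ℝ) < (i:ℝ)+1) (by linarith : (i:ℝ)+1 ≤ (i:ℝ)+2)
    linarith
  have huv_eq : u * v = u - v := by
    rw [hu_def, hv_def]; field_simp; norm_num
  obtain ⟨hP1l, hP1u⟩ := sub_pow_bounds (p+1) hb0 hba
  obtain ⟨_, hPu⟩ := sub_pow_bounds p hb0 hba
  have hq : ((p+1:ℕ):ℝ) = (p:ℝ)+1 := by push_cast; ring
  rw [hq] at hP1l hP1u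
  have hqe : (p+1) - 1 = p := by omega
  rw [hqe] at hP1l hP1u
  have hp1pos : (0:ℝ) < (p:ℝ)+1 := by positivity
  have hΔu : (a^(p+1) - b^(p+1))/((p:ℝ)+1) ≤ a^p * (a-b) := by
    rw [div_le_iff₀ hp1pos]
    exact le_trans hP1u (le_of_eq (by ring))
  have hΔl : b^p * (a-b) ≤ (a^(p+1) - b^(p+1))/((p:ℝ)+1) := by
    rw [le_div_iff₀ hp1pos]
    exact le_trans (le_of_eq (by ring : b^p*(a-b)*((p:ℝ)+1) = ((p:ℝ)+1)*b^p*(a-b))) hP1l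
  have hgv : a^p / ((i:ℝ)+2) = a^p * v := by
    rw [hv_def]; ring
  rw [hgv]
  have hpow : a^(p-1) ≤ a^p := pow_le_pow_right₀ ha1 (Nat.sub_le p 1)
  have h2 : a^p - b^p ≤ (p:ℝ) * a^p * (a-b) := by
    have := mul_le_mul_of_nonneg_right
      (mul_le_mul_of_nonneg_left hpow (Nat.cast_nonneg p : (0:ℝ) ≤ (p:ℝ))) hd0
    nlinarith [hPu]
  have m1 : a^p*(a-b) ≤ a^p*u := mul_le_mul_of_nonneg_left hdu hap
  have m2 : a^p*(u-v) ≤ Lp*(u-v) := mul_le_mul_of_nonneg_right hapn huv0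
  have m3 : b^p*v ≤ b^p*(a-b) := mul_le_mul_of_nonneg_left hdl (pow_nonneg hb0 p)
  have m4 : (a^p - b^p)*v ≤ ((p:ℝ)*a^p*(a-b))*v := mul_le_mul_of_nonneg_right h2 hvpos.le
  have m5 : (p:ℝ)*a^p*((a-b)*v) ≤ (p:ℝ)*a^p*(u*v) :=
    mul_le_mul_of_nonneg_left (mul_le_mul_of_nonneg_right hdu hvpos.le)
      (by positivity : (0:ℝ) ≤ (p:ℝ)*a^p)
  have m6 : (p:ℝ)*a^p*(u-v) ≤ (p:ℝ)*Lp*(u-v) :=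
    mul_le_mul_of_nonneg_right
      (mul_le_mul_of_nonneg_left hapn (Nat.cast_nonneg p : (0:ℝ) ≤ (p:ℝ))) huv0
  have hX : (0:ℝ) ≤ Lp*(u-v) := mul_nonneg hLp0 huv0
  have hpX : (0:ℝ) ≤ (p:ℝ)*(Lp*(u-v)) := mul_nonneg (Nat.cast_nonneg p) hX
  rw [abs_le]
  constructor
  · linarith [hΔu, m1, m2, hX, hpX]
  · have m5' : (p:ℝ)*a^p*(u*v) = (p:ℝ)*a^p*(u-v) := by rw [huv_eq]
    linarith [hΔl, m3, m4, m5, m5', m6, hX, hpX]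

lemma log_pow_sum (p n : ℕ) (hp : 1 ≤ p) (hn : 3 ≤ n) :
    |(∑ j ∈ Finset.Icc 1 n, (Real.log j)^p / (j:ℝ)) - (Real.log n)^(p+1)/((p:ℝ)+1)|
      ≤ ((p:ℝ)+4) * (Real.log n)^p := by
  have hlogn1 : 1 ≤ Real.log n := one_le_log _ (by exact_mod_cast hn)
  have hLp0 : (0:ℝ) ≤ (Real.log n)^p := by positivity
  have hLp1 : (1:ℝ) ≤ (Real.log n)^p := one_le_pow₀ hlogn1
  set G : ℕ → ℝ := fun j => (Real.log j)^(p+1)/((p:ℝ)+1) with hG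
  set f : ℕ → ℝ := fun j => (Real.log j)^p / (j:ℝ) with hf
  have hre : (∑ j ∈ Finset.Icc 1 n, f j) = ∑ i ∈ Finset.range (n-1), f (i+2) := by
    rw [show Finset.Icc 1 n = Finset.Ico 1 (n+1) from rfl, Finset.sum_Ico_eq_sum_range]
    have he : n + 1 - 1 = (n-1) + 1 := by omega
    rw [he, Finset.sum_range_succ']
    have hf1 : f (1+0) = 0 := by
      simp [hf, Real.log_one, zero_pow (by omega : p ≠ 0)]
    rw [hf1, add_zero]
    apply Finset.sum_congr rfl
    intro i _
    congr 1
    omega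
  have htel : (∑ i ∈ Finset.range (n-1), (G (i+2) - G (i+1))) = G n := by
    have h := Finset.sum_range_sub (fun i => G (i+1)) (n-1)
    have h1 : G (0+1) = 0 := by
      simp [hG, Real.log_one, zero_pow (by omega : p + 1 ≠ 0)]
    have h2 : n - 1 + 1 = n := by omega
    rw [h2, h1, sub_zero] at h
    exact h
  have hGn : G n = (Real.log n)^(p+1)/((p:ℝ)+1) := rfl
  rw [hre, ← hGn, ← htel, ← Finset.sum_sub_distrib]
  have habs := Finset.abs_sum_le_sum_abs
    (fun i => f (i+2) - (G (i+2) - G (i+1))) (Finset.range (n-1))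
  have hstep : ∑ i ∈ Finset.range (n-1), |f (i+2) - (G (i+2) - G (i+1))|
      ≤ ∑ i ∈ Finset.range (n-1), ((p:ℝ)+4) * (Real.log n)^p * (1/((i:ℝ)+1) - 1/((i:ℝ)+2)) := by
    apply Finset.sum_le_sum
    intro i hi
    simp only [Finset.mem_range] at hi
    have hterm : f (i+2) - (G (i+2) - G (i+1))
        = (Real.log ((i+2:ℕ):ℝ))^p / ((i:ℝ)+2)
          - ((Real.log ((i+2:ℕ):ℝ))^(p+1) - (Real.log ((i+1:ℕ):ℝ))^(p+1))/((p:ℝ)+1) := by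
      simp only [hf, hG]
      push_cast
      ring
    rw [hterm]
    rcases Nat.eq_zero_or_pos i with rfl | hipos
    · -- i = 0 : j = 2
      have hc2 : ((0+2:ℕ):ℝ) = 2 := by norm_num
      have hc1 : ((0+1:ℕ):ℝ) = 1 := by norm_num
      rw [hc2, hc1]
      have hl2 : (0:ℝ) ≤ Real.log 2 := Real.log_nonneg one_le_two
      have h2p : (Real.log 2)^p ≤ 1 := pow_le_one₀ hl2 log_two_le_one
      have h2p1 : (Real.log 2)^(p+1) ≤ 1 := pow_le_one₀ hl2 log_two_le_one
      have h2p0 : (0:ℝ) ≤ (Real.log 2)^p := by positivity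
      have h2p10 : (0:ℝ) ≤ (Real.log 2)^(p+1) := by positivity
      have hlog1 : Real.log 1 = 0 := Real.log_one
      rw [hlog1]
      have hz : (0:ℝ)^(p+1) = 0 := zero_pow (by omega)
      rw [hz]
      have hp1pos : (0:ℝ) < (p:ℝ)+1 := by positivity
      have hG2le : ((Real.log 2)^(p+1) - 0)/((p:ℝ)+1) ≤ 1 := by
        rw [div_le_one hp1pos]; linarith
      have hG2ge : (0:ℝ) ≤ ((Real.log 2)^(p+1) - 0)/((p:ℝ)+1) := by
        rw [sub_zero]; positivity
      have hf2le : (Real.log 2)^p / ((0:ℝ)+2) ≤ 1/2 := by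
        rw [div_le_div_iff₀ (by norm_num) (by norm_num)]; linarith
      have hf2ge : (0:ℝ) ≤ (Real.log 2)^p / ((0:ℝ)+2) := by positivity
      have hpLp : (0:ℝ) ≤ (p:ℝ) * (Real.log n)^p := by positivity
      rw [abs_le]
      push_cast
      constructor <;> nlinarith [hLp1, hpLp]
    · have hpt := per_term p i n hipos (by omega)
      have hrw : ((i+2:ℕ):ℝ) = (i:ℝ)+2 := by push_cast; ring
      have hrw1 : ((i+1:ℕ):ℝ) = (i:ℝ)+1 := by push_cast; ring
      rw [hrw, hrw1]
      rw [hrw, hrw1] at hpt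
      exact hpt
  have hsum : (∑ i ∈ Finset.range (n-1), (1/((i:ℝ)+1) - 1/((i:ℝ)+2))) ≤ 1 := by
    have h := Finset.sum_range_sub' (fun i => 1/((i:ℝ)+1)) (n-1)
    have hcong : (∑ i ∈ Finset.range (n-1), (1/((i:ℝ)+1) - 1/((i:ℝ)+2)))
        = ∑ i ∈ Finset.range (n-1), (1/((i:ℝ)+1) - 1/(((i+1:ℕ):ℝ)+1)) := by
      apply Finset.sum_congr rfl
      intro i _
      push_cast
      ring
    rw [hcong, h]
    have : (0:ℝ) ≤ 1/(((n-1:ℕ):ℝ)+1) := by positivity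
    norm_num
    linarith
  calc |∑ i ∈ Finset.range (n-1), (f (i+2) - (G (i+2) - G (i+1)))|
      ≤ ∑ i ∈ Finset.range (n-1), |f (i+2) - (G (i+2) - G (i+1))| := habs
    _ ≤ ∑ i ∈ Finset.range (n-1), ((p:ℝ)+4) * (Real.log n)^p * (1/((i:ℝ)+1) - 1/((i:ℝ)+2)) := hstep
    _ = ((p:ℝ)+4) * (Real.log n)^p * (∑ i ∈ Finset.range (n-1), (1/((i:ℝ)+1) - 1/((i:ℝ)+2))) := by
        rw [Finset.mul_sum]
    _ ≤ ((p:ℝ)+4) * (Real.log n)^p * 1 := by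
        apply mul_le_mul_of_nonneg_left hsum (by positivity)
    _ = ((p:ℝ)+4) * (Real.log n)^p := by ring

lemma aa_one_val (m : ℕ) : aa 1 m = 1 := by
  simp [aa]

lemma aa_two_val (m : ℕ) : aa 2 m = 2 - 1/(2:ℝ)^m := by
  rw [aa, show Finset.Icc 1 2 = {1, 2} by decide,
    Finset.sum_pair (by norm_num : (1:ℕ) ≠ 2)]
  norm_num
  ring

lemma main_bound (m : ℕ) (hm : 1 ≤ m) :
    ∃ C : ℝ, 0 < C ∧ ∀ n : ℕ, 3 ≤ n →
      |aa n m - (Real.log n)^m/(m.factorial:ℝ)| ≤ C * (Real.log n)^(m-1) := by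
  induction m with
  | zero => omega
  | succ m ih =>
    rcases Nat.lt_or_ge (1:ℕ) (m+1) with h1 | h1
    case inr =>
      have hm0 : m = 0 := by omega
      subst hm0
      refine ⟨1, by norm_num, ?_⟩
      intro n hn
      have hb := harmonic_bounds n (by omega)
      have hnpos : (0:ℝ) < (n:ℝ) := by
        have : (0:ℕ) < n := by omega
        exact_mod_cast this
      have hinv : (0:ℝ) < 1/(n:ℝ) := by positivity
      show |aa n 1 - Real.log n ^ 1 / ((Nat.factorial 1 : ℕ):ℝ)| ≤ 1 * Real.log n ^ 0
      simp only [pow_one, Nat.factorial_one, Nat.cast_one, div_one, pow_zero, mul_one]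
      rw [aa_one]
      rw [abs_le]
      constructor <;> linarith [hb.1, hb.2]
    case inl =>
      have hm' : 1 ≤ m := by omega
      obtain ⟨C, hC0, hC⟩ := ih hm'
      refine ⟨(m:ℝ) + 7 + 2*C, by positivity, ?_⟩
      intro n hn
      have hn3 : (3:ℝ) ≤ (n:ℝ) := by exact_mod_cast hn
      have hlogn1 : 1 ≤ Real.log n := one_le_log _ hn3
      have hLm0 : (0:ℝ) ≤ (Real.log n)^m := by positivity
      have hLm1 : (1:ℝ) ≤ (Real.log n)^m := one_le_pow₀ hlogn1
      have hmf1 : (1:ℝ) ≤ (m.factorial : ℝ) := by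
        exact_mod_cast Nat.one_le_iff_ne_zero.mpr m.factorial_pos.ne'
      have hmf0 : (0:ℝ) < (m.factorial : ℝ) := by linarith
      set mf := (m.factorial : ℝ) with hmf_def
      set e : ℕ → ℝ := fun j => (aa j m - (Real.log j)^m/mf)/(j:ℝ) with he_def
      have hfacts : ((m+1).factorial : ℝ) = mf * ((m:ℝ)+1) := by
        rw [hmf_def, Nat.factorial_succ]; push_cast; ring
      set Sg := ∑ j ∈ Finset.Icc 1 n, (Real.log j)^m/(j:ℝ) with hSg
      clear_value mf Sg
      have hdecomp :
          aa n (m+1) - (Real.log n)^(m+1)/(((m+1).factorial):ℝ)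
          = (∑ j ∈ Finset.Icc 1 n, e j)
            + (1/mf) * (Sg - (Real.log n)^(m+1)/((m:ℝ)+1)) := by
        have h1 : (∑ j ∈ Finset.Icc 1 n, e j)
            = (∑ j ∈ Finset.Icc 1 n, aa j m/(j:ℝ)) - (1/mf) * Sg := by
          rw [hSg, Finset.mul_sum, ← Finset.sum_sub_distrib]
          apply Finset.sum_congr rfl
          intro j _
          simp only [he_def]
          ring
        rw [aa_rec, hfacts, h1]
        have hx : (Real.log (n:ℝ))^(m+1) / (mf * ((m:ℝ)+1))
            = 1/mf * ((Real.log (n:ℝ))^(m+1)/((m:ℝ)+1)) := by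
          rw [mul_comm mf, ← div_div]
          ring
        rw [hx]
        ring
      have hkey := log_pow_sum m n hm' hn
      rw [← hSg] at hkey
      have habs2 : |(1/mf) * (Sg
          - (Real.log n)^(m+1)/((m:ℝ)+1))| ≤ ((m:ℝ)+4) * (Real.log n)^m := by
        rw [abs_mul]
        have h1mf : |1/mf| ≤ 1 := by
          rw [abs_of_pos (by positivity)]
          rw [div_le_one hmf0]
          linarith
        calc |1/mf| * |_| ≤ 1 * (((m:ℝ)+4) * (Real.log n)^m) :=
              mul_le_mul h1mf hkey (abs_nonneg _) zero_le_one
          _ = ((m:ℝ)+4) * (Real.log n)^m := one_mul _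
      have hsplit : (∑ j ∈ Finset.Icc 1 n, e j)
          = (∑ j ∈ Finset.Ioc 0 2, e j) + ∑ j ∈ Finset.Ioc 2 n, e j := by
        rw [show Finset.Icc 1 n = Finset.Ioc 0 n from Finset.Icc_add_one_left_eq_Ioc 0 n]
        rw [Finset.sum_Ioc_consecutive _ (by omega : (0:ℕ) ≤ 2) (by omega : 2 ≤ n)]
      have hl2 : (0:ℝ) ≤ Real.log 2 := Real.log_nonneg one_le_two
      have hl2m : (Real.log 2)^m ≤ 1 := pow_le_one₀ hl2 log_two_le_one
      have hl2m0 : (0:ℝ) ≤ (Real.log 2)^m := by positivity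
      have hE1 : |∑ j ∈ Finset.Ioc 0 2, e j| ≤ 3 := by
        rw [show Finset.Ioc 0 2 = {1, 2} by decide,
          Finset.sum_pair (by norm_num : (1:ℕ) ≠ 2)]
        have he1 : e 1 = 1 := by
          simp [he_def, aa_one_val, Real.log_one, zero_pow (by omega : m ≠ 0)]
        have he2 : |e 2| ≤ 2 := by
          simp only [he_def]
          rw [abs_div]
          have hc2 : ((2:ℕ):ℝ) = 2 := by norm_num
          rw [hc2]
          rw [abs_of_pos (by norm_num : (0:ℝ) < 2)]
          rw [div_le_iff₀ (by norm_num : (0:ℝ) < 2)]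
          have hv := aa_two_val m
          have h2m : (1:ℝ) ≤ (2:ℝ)^m := one_le_pow₀ (by norm_num)
          have h2m0 : (0:ℝ) < (2:ℝ)^m := by positivity
          have hd1 : (0:ℝ) ≤ (Real.log 2)^m/mf := by positivity
          have hd2 : (Real.log 2)^m/mf ≤ 1 := by
            rw [div_le_one hmf0]; linarith
          have hinv2 : 0 < 1/(2:ℝ)^m := by positivity
          have hinv2' : 1/(2:ℝ)^m ≤ 1 := by
            rw [div_le_one h2m0]; linarith
          rw [abs_le]
          constructor <;> (rw [hv]; linarith)
        calc |e 1 + e 2| ≤ |e 1| + |e 2| := abs_add_le _ _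
          _ ≤ 1 + 2 := by rw [he1]; simp; linarith [he2]
          _ = 3 := by norm_num
      have hharm : (∑ j ∈ Finset.Ioc 2 n, 1/(j:ℝ)) ≤ 2 * Real.log n := by
        have hsub : Finset.Ioc 2 n ⊆ Finset.Icc 1 n := by
          intro x hx
          simp only [Finset.mem_Ioc] at hx
          simp only [Finset.mem_Icc]
          omega
        have h1 : (∑ j ∈ Finset.Ioc 2 n, 1/(j:ℝ)) ≤ ∑ j ∈ Finset.Icc 1 n, 1/(j:ℝ) :=
          Finset.sum_le_sum_of_subset_of_nonneg hsub (fun i _ _ => by positivity)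
        have hb := harmonic_bounds n (by omega)
        linarith [hb.2, hlogn1]
      have hE2 : |∑ j ∈ Finset.Ioc 2 n, e j| ≤ 2*C*(Real.log n)^m := by
        have hLm10 : (0:ℝ) ≤ (Real.log n)^(m-1) := by positivity
        calc |∑ j ∈ Finset.Ioc 2 n, e j| ≤ ∑ j ∈ Finset.Ioc 2 n, |e j| :=
              Finset.abs_sum_le_sum_abs _ _
          _ ≤ ∑ j ∈ Finset.Ioc 2 n, C*(Real.log n)^(m-1) * (1/(j:ℝ)) := by
              apply Finset.sum_le_sum
              intro j hj
              simp only [Finset.mem_Ioc] at hj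
              have hj3 : 3 ≤ j := by omega
              have hjr : (0:ℝ) < (j:ℝ) := by
                have : (0:ℕ) < j := by omega
                exact_mod_cast this
              have hjn : (j:ℝ) ≤ (n:ℝ) := by exact_mod_cast hj.2
              have hnum : |aa j m - (Real.log j)^m/mf| ≤ C*(Real.log n)^(m-1) := by
                refine le_trans (hC j hj3) ?_
                have hj1 : (1:ℝ) ≤ (j:ℝ) := by
                  have : (1:ℕ) ≤ j := by omega
                  exact_mod_cast this
                have hpow : (Real.log j)^(m-1) ≤ (Real.log n)^(m-1) :=
                  pow_le_pow_left₀ (Real.log_nonneg hj1)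
                    (Real.log_le_log hjr hjn) _
                exact mul_le_mul_of_nonneg_left hpow hC0.le
              simp only [he_def]
              rw [abs_div, abs_of_pos hjr]
              rw [div_le_iff₀ hjr]
              have : C*(Real.log n)^(m-1) * (1/(j:ℝ)) * (j:ℝ) = C*(Real.log n)^(m-1) := by
                field_simp
              rw [this]
              exact hnum
          _ = C*(Real.log n)^(m-1) * ∑ j ∈ Finset.Ioc 2 n, 1/(j:ℝ) := by
              rw [Finset.mul_sum]
          _ ≤ C*(Real.log n)^(m-1) * (2*Real.log n) :=
              mul_le_mul_of_nonneg_left hharm (by positivity)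
          _ = 2*C*((Real.log n)^(m-1) * Real.log n) := by ring
          _ = 2*C*(Real.log n)^m := by
              rw [← pow_succ]
              congr 2
              omega
      -- combine
      simp only [Nat.add_sub_cancel]
      rw [hdecomp, hsplit]
      have hCL : (0:ℝ) ≤ C * (Real.log n)^m := by positivity
      calc |(∑ j ∈ Finset.Ioc 0 2, e j) + (∑ j ∈ Finset.Ioc 2 n, e j)
            + (1/mf) * (Sg
                - (Real.log n)^(m+1)/((m:ℝ)+1))|
          ≤ |(∑ j ∈ Finset.Ioc 0 2, e j)| + |(∑ j ∈ Finset.Ioc 2 n, e j)|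
            + |(1/mf) * (Sg
                - (Real.log n)^(m+1)/((m:ℝ)+1))| := by
            refine le_trans (abs_add_le _ _) ?_
            have := abs_add_le (∑ j ∈ Finset.Ioc 0 2, e j) (∑ j ∈ Finset.Ioc 2 n, e j)
            linarith
        _ ≤ ((m:ℝ) + 7 + 2*C) * (Real.log n)^m := by
            have hmLm : (0:ℝ) ≤ (m:ℝ) * (Real.log n)^m :=
              mul_nonneg (Nat.cast_nonneg m) hLm0
            nlinarith [hE1, hE2, habs2, hLm1, hCL, hmLm]


open Filter

/-- For each fixed `m ≥ 1`,
`a(n,m) = (log n)^m / m! + O((log n)^{m−1})` as `n → ∞`, i.e. there exist `C > 0` and `N`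
such that for all `n ≥ N`,
`|a(n,m) − (log n)^m / m!| ≤ C (log n)^{m−1}`, where
`a(n,m) = ∑_{k=1}^{n} C(n,k) (−1)^{k+1} / k^m`. -/
theorem alternating_binomial_sum_asymptotic
    (m : ℕ) (hm : 1 ≤ m) :
    ∃ C : ℝ, 0 < C ∧ ∃ N : ℕ, ∀ n : ℕ, N ≤ n →
      |(∑ k ∈ Finset.Icc 1 n, (n.choose k : ℝ) * (-1 : ℝ) ^ (k + 1) / (k : ℝ) ^ m)
          - (Real.log n) ^ m / (m.factorial : ℝ)|
        ≤ C * (Real.log n) ^ (m - 1) := by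
  obtain ⟨C, hC0, hC⟩ := main_bound m hm
  refine ⟨C, hC0, 3, fun n hn => ?_⟩
  have h := hC n hn
  simp only [aa] at h
  exact h
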